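/- For every γ with 0 < γ < 1, there exists p ≥ 1 such that C_p(0,γ) < 0, where C_p(0,γ) is defined by C_1(0,γ)=1 and C_p(0,γ) = C_{p+1}(0,γ) + γ Σ_{i=0}^{p-1} C_{i+1}(0,γ) C_{p-i}(0,γ). -/

import Mathlib

set_option maxHeartbeats 1000000

section Helpers
open PowerSeries

lemma aux_osc (θ : ℝ) (hθ0 : 0 < θ) (hθ2 : θ < Real.pi / 2)
    (u : ℕ → ℝ) (hu : ∀ k, 0 < u k)
    (hur : ∀ k, u (k+1) ≤ 2 * Real.cos θ - 1 / u k) : False := by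
  have hpi := Real.pi_pos
  have claim : ∀ k : ℕ, 1 ≤ k → (∀ j : ℕ, 1 ≤ j → j ≤ k → 0 < Real.sin (j * θ)) →
      u k * Real.sin (k * θ) ≤ Real.sin ((k + 1) * θ) := by
    intro k
    induction k with
    | zero => intro h; omega
    | succ n ih =>
      intro _ hsin
      by_cases hn : 1 ≤ n
      · have h1 : u n * Real.sin (n * θ) ≤ Real.sin ((n + 1) * θ) :=
          ih hn (fun j hj1 hj2 => hsin j hj1 (by omega))
        have hsn : (0:ℝ) < Real.sin (n * θ) := hsin n hn (by omega)
        have hsn1 : (0:ℝ) < Real.sin ((n + 1) * θ) := by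
          have := hsin (n+1) (by omega) (by omega)
          push_cast at this ⊢; exact this
        have hinv : Real.sin (n * θ) / Real.sin ((n + 1) * θ) ≤ 1 / u n := by
          rw [div_le_div_iff₀ hsn1 (hu n)]
          nlinarith [hu n]
        have h2 : u (n+1) ≤ 2 * Real.cos θ - Real.sin (n * θ) / Real.sin ((n + 1) * θ) := by
          have := hur n; linarith
        have h3 : u (n+1) * Real.sin ((n + 1) * θ) ≤
            2 * Real.cos θ * Real.sin ((n + 1) * θ) - Real.sin (n * θ) := by
          have := mul_le_mul_of_nonneg_right h2 (le_of_lt hsn1)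
          rw [sub_mul, div_mul_cancel₀ _ (ne_of_gt hsn1)] at this
          linarith
        have hadd := Real.sin_add (((n:ℝ) + 1) * θ) θ
        have hsub := Real.sin_sub (((n:ℝ) + 1) * θ) θ
        have e1 : ((n:ℝ) + 1) * θ + θ = ((n:ℝ) + 1 + 1) * θ := by ring
        have e2 : ((n:ℝ) + 1) * θ - θ = (n:ℝ) * θ := by ring
        rw [e1] at hadd
        rw [e2] at hsub
        push_cast
        nlinarith [hadd, hsub, h3]
      · -- n = 0
        have hn0 : n = 0 := by omega
        subst hn0
        have hs1 : (0:ℝ) < Real.sin (1 * θ) := by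
          have := hsin 1 le_rfl le_rfl; push_cast at this ⊢; exact this
        have h2 : u 1 ≤ 2 * Real.cos θ := by
          have := hur 0
          have := one_div_pos.mpr (hu 0)
          linarith
        have h2m := Real.sin_two_mul θ
        push_cast
        rw [one_mul] at hs1
        have e : ((1:ℝ) + 1) * θ = 2 * θ := by ring
        rw [one_mul, e, h2m]
        nlinarith [mul_le_mul_of_nonneg_right h2 (le_of_lt hs1)]
  -- choose minimal m with π ≤ m θ
  have hex : ∃ m : ℕ, Real.pi ≤ m * θ := by
    obtain ⟨m, hm⟩ := exists_nat_gt (Real.pi / θ)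
    exact ⟨m, le_of_lt ((div_lt_iff₀ hθ0).mp hm)⟩
  classical
  obtain ⟨m, hm, hmin⟩ : ∃ m : ℕ, Real.pi ≤ (m:ℝ) * θ ∧
      ∀ j : ℕ, j < m → (j:ℝ) * θ < Real.pi := by
    refine ⟨Nat.find hex, Nat.find_spec hex, fun j hj => ?_⟩
    have := Nat.find_min hex hj
    push_neg at this; exact this
  have hm2 : 2 ≤ m := by
    by_contra hc
    push_neg at hc
    interval_cases m <;> simp_all <;> nlinarith
  obtain ⟨k, rfl⟩ : ∃ k, m = k + 1 := ⟨m - 1, by omega⟩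
  have hk1 : 1 ≤ k := by omega
  have hsins : ∀ j : ℕ, 1 ≤ j → j ≤ k → 0 < Real.sin (j * θ) := by
    intro j hj1 hj2
    apply Real.sin_pos_of_pos_of_lt_pi
    · positivity
    · exact hmin j (by omega)
  have hcl := claim k hk1 hsins
  have hkth : (k:ℝ) * θ < Real.pi := hmin k (by omega)
  have hskpos : 0 < Real.sin ((k:ℝ) * θ) := hsins k hk1 le_rfl
  have hlhs : 0 < u k * Real.sin ((k:ℝ) * θ) := mul_pos (hu k) hskpos
  have hrhs : Real.sin (((k:ℝ) + 1) * θ) ≤ 0 := by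
    have hcast : ((k:ℝ) + 1) * θ = ((k + 1 : ℕ) : ℝ) * θ := by push_cast; ring
    have hub : ((k:ℝ) + 1) * θ ≤ 2 * Real.pi := by nlinarith
    have hlb : Real.pi ≤ ((k:ℝ) + 1) * θ := by rw [hcast]; exact_mod_cast hm
    have h1 : 0 ≤ Real.sin (((k:ℝ) + 1) * θ - Real.pi) :=
      Real.sin_nonneg_of_nonneg_of_le_pi (by linarith) (by linarith)
    rw [Real.sin_sub_pi] at h1
    linarith
  linarith



lemma aux_E1 (γ : ℝ) (C : ℕ → ℝ) (hC1 : C 1 = 1)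
    (hrec : ∀ p : ℕ, 1 ≤ p →
      C p = C (p+1) + γ * ∑ i ∈ Finset.range p, C (i+1) * C (p - i)) :
    (PowerSeries.C γ) * (PowerSeries.mk fun n => if n = 0 then 0 else C n)^2
      + (1 - PowerSeries.X) * (PowerSeries.mk fun n => if n = 0 then 0 else C n)
      = PowerSeries.X := by
  set F : PowerSeries ℝ := PowerSeries.mk fun n => if n = 0 then 0 else C n with hF
  ext n
  rw [map_add, coeff_C_mul, sub_mul, map_sub, one_mul]
  have hconv : (coeff n) (F ^ 2) =
      ∑ k ∈ Finset.range (n+1), (if k = 0 then (0:ℝ) else C k) *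
        (if n - k = 0 then (0:ℝ) else C (n - k)) := by
    rw [sq, coeff_mul, Finset.Nat.sum_antidiagonal_eq_sum_range_succ_mk]
    simp [hF]
  match n with
  | 0 => simp [hF]
  | 1 =>
    rw [hconv]
    rw [Finset.sum_range_succ, Finset.sum_range_succ]
    norm_num
    simp [hF, hC1]
  | (m+2) =>
    rw [hconv]
    have h1 : ∑ k ∈ Finset.range (m+3), (if k = 0 then (0:ℝ) else C k) *
        (if m + 2 - k = 0 then (0:ℝ) else C (m + 2 - k))
        = ∑ i ∈ Finset.range (m+1), C (i+1) * C (m+1-i) := by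
      rw [Finset.sum_range_succ' _ (m+2), Finset.sum_range_succ]
      have e0 : m + 2 - (m + 1 + 1) = 0 := by omega
      rw [e0]
      simp only [if_pos rfl, if_true, if_false, Nat.succ_ne_zero, if_neg, mul_zero, zero_mul,
        add_zero, ite_true, ite_false, reduceIte]
      apply Finset.sum_congr rfl
      intro k hk
      have hk' : k < m + 1 := Finset.mem_range.mp hk
      have e1 : m + 2 - (k+1) = m + 1 - k := by omega
      have e2 : m + 1 - k ≠ 0 := by omega
      rw [e1, if_neg e2]
    rw [h1]
    have hr := hrec (m+1) (by omega)
    simp only [coeff_mk, coeff_succ_X_mul, coeff_X]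
    simp only [hF, coeff_mk]
    have h2 : (m + 2 = 0) = False := by simp
    have h3 : (m + 1 = 0) = False := by simp
    have h4 : (m + 2 = 1) = False := by simp
    simp only [h2, h3, h4, if_false]
    linarith [hr]

lemma aux_I (γ : ℝ) (hγ0 : 0 < γ) (C : ℕ → ℝ) (hC1 : C 1 = 1)
    (hrec : ∀ p : ℕ, 1 ≤ p →
      C p = C (p+1) + γ * ∑ i ∈ Finset.range p, C (i+1) * C (p - i)) :
    ∀ n : ℕ, 2 ≤ n →
      ((n:ℝ)+1) * C (n+1) = (1-2*γ)*(2*(n:ℝ)-1)*C n - ((n:ℝ)-2)*C (n-1) := by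
  have E1 := aux_E1 γ C hC1 hrec
  set F : PowerSeries ℝ := PowerSeries.mk fun n => if n = 0 then 0 else C n with hF
  set G : PowerSeries ℝ := PowerSeries.C γ with hG
  set Y : PowerSeries ℝ := 2 * G * F + 1 - PowerSeries.X with hY
  have E2 : Y^2 = 1 + (4 * G - 2) * PowerSeries.X + PowerSeries.X^2 := by
    rw [hY]
    linear_combination (4 * G) * E1
  set DY : PowerSeries ℝ := PowerSeries.derivative ℝ Y with hDY
  have E3 : 2 * Y * DY = (4 * G - 2) + 2 * PowerSeries.X := by
    have h := congrArg (PowerSeries.derivative ℝ) E2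
    rw [pow_two] at h
    rw [Derivation.leibniz, map_add, map_add, Derivation.map_one_eq_zero] at h
    rw [Derivation.leibniz, pow_two, Derivation.leibniz] at h
    rw [PowerSeries.derivative_X] at h
    have hder : (PowerSeries.derivative ℝ) (4 * G - 2) = 0 := by
      have : (4 : PowerSeries ℝ) * G - 2
          = PowerSeries.C (4 * γ - 2) := by
        simp [hG, map_sub, map_mul, map_ofNat]
      rw [this, PowerSeries.derivative_C]
    rw [hder] at h
    simp only [smul_eq_mul, smul_zero, mul_one, mul_zero, add_zero, zero_add] at h
    rw [← hDY] at h
    linear_combination h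
  have E4 : 2 * DY + (8 * G - 4) * (PowerSeries.X * DY)
        + 2 * (PowerSeries.X * (PowerSeries.X * DY))
      = (4 * G - 2) * Y + 2 * (PowerSeries.X * Y) := by
    linear_combination (-2 * DY) * E2 + Y * E3
  set y : ℕ → ℝ := fun k => PowerSeries.coeff k Y with hy
  have hcoeff : ∀ m : ℕ,
      2 * (y (m+3) * ((m:ℝ)+3)) + (8*γ-4) * (y (m+2) * ((m:ℝ)+2))
        + 2 * (y (m+1) * ((m:ℝ)+1))
      = (4*γ-2) * y (m+2) + 2 * y (m+1) := by
    intro m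
    have h := congrArg (PowerSeries.coeff (m+1+1)) E4
    have hG2 : (8 : PowerSeries ℝ) * G - 4 = PowerSeries.C (8*γ-4) := by
      simp [hG, map_sub, map_mul, map_ofNat]
    have hG3 : (4 : PowerSeries ℝ) * G - 2 = PowerSeries.C (4*γ-2) := by
      simp [hG, map_sub, map_mul, map_ofNat]
    have htwo : (2 : PowerSeries ℝ) = PowerSeries.C 2 := (map_ofNat _ 2).symm
    rw [hG2, hG3, htwo] at h
    simp only [map_add, PowerSeries.coeff_C_mul, PowerSeries.coeff_succ_X_mul] at h
    rw [hDY] at h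
    simp only [PowerSeries.coeff_derivative] at h
    simp only [hy]
    norm_num at h ⊢
    push_cast at h ⊢
    linarith [h]
  have h2G : (2 : PowerSeries ℝ) * G = PowerSeries.C (2*γ) := by
    simp [hG, map_mul, map_ofNat]
  have hyk : ∀ j : ℕ, y (j+2) = 2*γ*C (j+2) := by
    intro j
    show PowerSeries.coeff (j+2) Y = _
    rw [hY, mul_assoc 2 G F, ← mul_assoc, h2G]
    rw [map_sub, map_add, PowerSeries.coeff_C_mul]
    simp [hF, PowerSeries.coeff_one, PowerSeries.coeff_X]
  have hy1 : y 1 = 2*γ - 1 := by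
    show PowerSeries.coeff 1 Y = _
    rw [hY, mul_assoc 2 G F, ← mul_assoc, h2G]
    rw [map_sub, map_add, PowerSeries.coeff_C_mul]
    simp [hF, PowerSeries.coeff_one, PowerSeries.coeff_X, hC1]
  have hne : (4:ℝ)*γ ≠ 0 := by positivity
  intro n hn
  obtain ⟨m, rfl⟩ : ∃ m, n = m + 2 := ⟨n-2, by omega⟩
  have hk := hcoeff m
  have en1 : m + 2 - 1 = m + 1 := by omega
  rw [en1]
  rcases Nat.eq_zero_or_pos m with hm|hm
  · subst hm
    rw [show (0:ℕ)+3 = 1+2 from rfl, hyk 1] at hk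
    rw [show (0:ℕ)+2 = 0+2 from rfl, hyk 0] at hk
    rw [show (0:ℕ)+1 = 1 from rfl, hy1] at hk
    apply mul_left_cancel₀ hne
    push_cast at hk ⊢
    linear_combination hk
  · obtain ⟨j, rfl⟩ : ∃ j, m = j + 1 := ⟨m-1, by omega⟩
    rw [show j+1+3 = (j+2)+2 from by omega, hyk (j+2)] at hk
    rw [show j+1+2 = (j+1)+2 from by omega, hyk (j+1)] at hk
    rw [show j+1+1 = j+2 from by omega, hyk j] at hk
    apply mul_left_cancel₀ hne
    push_cast at hk ⊢
    linear_combination hk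

end Helpers

/-- For every `γ` with `0 < γ < 1`, there exists `p ≥ 1` such that
`C_p(0,γ) < 0`, where `C_p(0,γ)` is defined by `C_1(0,γ) = 1` and the recursion
`C_p(0,γ) = C_{p+1}(0,γ) + γ ∑_{i=0}^{p-1} C_{i+1}(0,γ) C_{p-i}(0,γ)`. -/
theorem exists_negative_C_at_lambda_zero
    (γ : ℝ) (hγ0 : 0 < γ) (hγ1 : γ < 1)
    (C : ℕ → ℝ)
    (hC1 : C 1 = 1)
    (hrec : ∀ p : ℕ, 1 ≤ p →
      C p = C (p+1) + γ * ∑ i ∈ Finset.range p, C (i+1) * C (p - i)) :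
    ∃ p : ℕ, 1 ≤ p ∧ C p < 0 := by
  by_contra hcon
  push_neg at hcon
  have hI := aux_I γ hγ0 C hC1 hrec
  have hC2 : C 2 = 1 - γ := by
    have h := hrec 1 le_rfl
    simp [Finset.sum_range_one, hC1] at h
    linarith
  set t : ℝ := 1 - 2*γ with ht
  have hI2 := hI 2 le_rfl
  have hI3 := hI 3 (by omega)
  norm_num at hI2 hI3
  -- hI2 : 3 * C 3 = t * 3 * C 2 (roughly)
  rcases le_or_gt t 0 with htle|htpos
  · have hC3 : C 3 = t * (1 - γ) := by rw [← hC2]; linarith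
    rcases eq_or_lt_of_le htle with hteq|htlt
    · -- t = 0
      have hC30 : C 3 = 0 := by rw [hC3, hteq]; ring
      have : 4 * C 4 = -(1-γ) := by rw [← hC2]; rw [hC30] at hI3; linarith
      have h4 := hcon 4 (by omega)
      linarith
    · have h3 := hcon 3 (by omega)
      nlinarith
  · -- 0 < t
    have hpos : ∀ p : ℕ, 1 ≤ p → 0 < C p := by
      have key : ∀ p : ℕ, 1 ≤ p → 0 < C p ∧ 0 < C (p+1) := by
        intro p hp
        induction p, hp using Nat.le_induction with
        | base => exact ⟨by rw [hC1]; norm_num, by rw [hC2]; linarith⟩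
        | succ p hp ih =>
          obtain ⟨h1, h2⟩ := ih
          refine ⟨h2, ?_⟩
          rcases lt_or_eq_of_le (hcon (p+2) (by omega)) with h|h
          · exact h
          · exfalso
            have hIp := hI (p+2) (by omega)
            rw [show p+2-1 = p+1 from by omega, ← h] at hIp
            push_cast at hIp
            have h3 := hcon (p+3) (by omega)
            have hc3 : ((p:ℝ)+2+1) * C (p+2+1) = -(((p:ℝ)+2)-2) * C (p+1) := by
              rw [hIp]; ring
            rw [show p+2+1 = p+3 from by omega] at hc3
            have hp1 : (1:ℝ) ≤ (p:ℝ) := by exact_mod_cast hp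
            have hnn : 0 ≤ ((p:ℝ)+2+1) * C (p+3) := mul_nonneg (by linarith) h3
            nlinarith [hc3, h2, hp1, hnn, mul_pos (show (0:ℝ) < (p:ℝ) by linarith) h2]
      exact fun p hp => (key p hp).1
    have ht1 : t < 1 := by rw [ht]; linarith
    set t' : ℝ := (1 + t)/2 with ht'
    have ht'0 : 0 < t' := by rw [ht']; linarith
    have ht'1 : t' < 1 := by rw [ht']; linarith
    have htt' : t < t' := by rw [ht']; linarith
    set c : ℝ := (1 + t'^2)/2 with hcdef
    have hc0 : 0 < c := by rw [hcdef]; nlinarith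
    have hc1 : c < 1 := by rw [hcdef]; nlinarith
    have ht'c : t'^2 < c := by rw [hcdef]; nlinarith
    set sc : ℝ := Real.sqrt c with hscdef
    have hsc : 0 < sc := Real.sqrt_pos.mpr hc0
    have hsc2 : sc^2 = c := Real.sq_sqrt hc0.le
    set t'' : ℝ := t' / sc with ht''
    have ht''0 : 0 < t'' := div_pos ht'0 hsc
    have ht''1 : t'' < 1 := by
      rw [ht'', div_lt_one hsc]
      nlinarith
    set θ : ℝ := Real.arccos t'' with hθ
    have hcos : Real.cos θ = t'' := Real.cos_arccos (by linarith) (by linarith)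
    have hθ0 : 0 < θ := Real.arccos_pos.mpr ht''1
    have hθ2 : θ < Real.pi/2 := Real.arccos_lt_pi_div_two.mpr ht''0
    obtain ⟨N0, hN0⟩ := exists_nat_gt ((2+c)/(1-c))
    set N : ℕ := N0 + 3 with hN
    have hcN : ∀ p : ℕ, N ≤ p → c*((p:ℝ)+1) ≤ (p:ℝ)-2 := by
      intro p hp
      have hp' : ((2+c)/(1-c)) < (p:ℝ) := by
        have : (N0:ℝ) ≤ (p:ℝ) := by exact_mod_cast le_trans (by omega) hp
        linarith
      have := (div_lt_iff₀ (by linarith : (0:ℝ) < 1 - c)).mp hp'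
      linarith
    have hkey : ∀ q : ℕ, N ≤ q + 1 → C (q+2) ≤ 2*t'*C (q+1) - c*C q := by
      intro q hq
      have h := hI (q+1) (by omega)
      rw [show q+1-1 = q from by omega, show q+1+1 = q+2 from by omega] at h
      push_cast at h
      have hq0 : 0 < C q := hpos q (by omega)
      have hq1 : 0 < C (q+1) := hpos (q+1) (by omega)
      have hq2 : (0:ℝ) < (q:ℝ)+2 := by positivity
      have hqc : (0:ℝ) ≤ (q:ℝ) := Nat.cast_nonneg q
      have hb1 : t*(2*((q:ℝ)+1)-1)*C (q+1) ≤ 2*t'*(((q:ℝ)+2))*C (q+1) := by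
        have hcoef : t*(2*((q:ℝ)+1)-1) ≤ 2*t'*((q:ℝ)+2) := by nlinarith
        exact mul_le_mul_of_nonneg_right hcoef hq1.le
      have hb2 : c*((q:ℝ)+2)*C q ≤ (((q:ℝ)+1)-2)*C q := by
        have hh := hcN (q+1) hq
        push_cast at hh
        have hcoef : c*((q:ℝ)+2) ≤ ((q:ℝ)+1)-2 := by linarith
        exact mul_le_mul_of_nonneg_right hcoef hq0.le
      have hr : ((q:ℝ)+2)*(2*t'*C (q+1) - c*C q)
          = 2*t'*((q:ℝ)+2)*C (q+1) - c*((q:ℝ)+2)*C q := by ring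
      have hl : ((q:ℝ)+1+1) * C (q+2) = ((q:ℝ)+2) * C (q+2) := by ring
      rw [hl] at h
      have hmul : ((q:ℝ)+2) * C (q+2) ≤ ((q:ℝ)+2) * (2*t'*C (q+1) - c*C q) := by
        rw [hr]
        linarith [h, hb1, hb2]
      exact le_of_mul_le_mul_left hmul hq2
    set u : ℕ → ℝ := fun k => C (N+k+1) / (sc * C (N+k)) with hu_def
    have hu : ∀ k, 0 < u k :=
      fun k => div_pos (hpos _ (by omega)) (mul_pos hsc (hpos _ (by omega)))
    have hur : ∀ k, u (k+1) ≤ 2 * Real.cos θ - 1 / u k := by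
      intro k
      rw [hcos]
      have hp1 : 0 < C (N+k) := hpos _ (by omega)
      have hp2 : 0 < C (N+k+1) := hpos _ (by omega)
      have hq := hkey (N+k) (by omega)
      have h1u : 1 / u k = sc * C (N+k) / C (N+k+1) := by
        rw [hu_def]
        simp only []
        rw [one_div_div]
      have huk1 : u (k+1) = C (N+k+2) / (sc * C (N+k+1)) := by
        rw [hu_def]
        simp only []
        rw [show N+(k+1)+1 = N+k+2 from by omega, show N+(k+1) = N+k+1 from by omega]
      rw [h1u, huk1, ht'']
      rw [div_le_iff₀ (mul_pos hsc hp2)]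
      have hexp : (2*(t'/sc) - sc * C (N+k) / C (N+k+1)) * (sc * C (N+k+1))
          = 2*t'*C (N+k+1) - sc^2 * C (N+k) := by
        field_simp
      rw [hexp, hsc2]
      exact hq
    exact aux_osc θ hθ0 hθ2 u hu hur
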